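/- Let S = U ++ [c] ++ V be a string in which c does not occur in V (so the displayed occurrence of c is the last occurrence of c in S). Then for every string T, LCSS(S, T ++ [c]) = max( LCSS(S, T), 1 + LCSS(U, T) ). -/

import Mathlib

/-- `StepsIn R k S T` holds if there is a sequence of exactly `k` steps of the
relation `R` transforming `S` into `T`. -/
def StepsIn {α : Type*} (R : List α → List α → Prop) : ℕ → List α → List α → Prop
  | 0, S, T => S = T
  | n + 1, S, T => ∃ M, R S M ∧ StepsIn R n M T

/-- A single delete or insert operation on a string. -/
inductive DIStep {α : Type*} : List α → List α → Prop
  | del (U V : List α) (c : α) : DIStep (U ++ [c] ++ V) (U ++ V)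
  | ins (U V : List α) (c : α) : DIStep (U ++ V) (U ++ [c] ++ V)

/-- The delete–insert edit distance: the minimum number of single-character
deletions and insertions transforming `S` into `T`. -/
noncomputable def dDI {α : Type*} (S T : List α) : ℕ :=
  sInf {n | StepsIn DIStep n S T}

/-- The length of a longest common subsequence of `S` and `T`. -/
noncomputable def lcss {α : Type*} (S T : List α) : ℕ :=
  sSup {n | ∃ L : List α, L.Sublist S ∧ L.Sublist T ∧ L.length = n}


private lemma lcss_set_nonempty {α : Type*} (S T : List α) :
    ({n | ∃ L : List α, L.Sublist S ∧ L.Sublist T ∧ L.length = n}).Nonempty :=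
  ⟨0, [], List.nil_sublist _, List.nil_sublist _, rfl⟩

private lemma lcss_set_bdd {α : Type*} (S T : List α) :
    BddAbove {n | ∃ L : List α, L.Sublist S ∧ L.Sublist T ∧ L.length = n} :=
  ⟨S.length, fun n ⟨_, hS, _, hl⟩ => hl ▸ hS.length_le⟩

private lemma le_lcss {α : Type*} {S T L : List α} (hS : L.Sublist S) (hT : L.Sublist T) :
    L.length ≤ lcss S T :=
  le_csSup (lcss_set_bdd S T) ⟨L, hS, hT, rfl⟩

private lemma lcss_exists {α : Type*} (S T : List α) :
    ∃ L : List α, L.Sublist S ∧ L.Sublist T ∧ L.length = lcss S T :=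
  Nat.sSup_mem (lcss_set_nonempty S T) (lcss_set_bdd S T)

private lemma concat_sublist_concat {α : Type*} {L U : List α} {c : α}
    (h : (L ++ [c]).Sublist (U ++ [c])) : L.Sublist U := by
  rcases List.sublist_append_iff.mp h with ⟨l₁, l₂, heq, h₁, h₂⟩
  rcases List.sublist_singleton.mp h₂ with rfl | rfl
  · rw [List.append_nil] at heq
    subst heq
    exact (List.sublist_append_left L [c]).trans h₁
  · have : L = l₁ := by
      have := (List.append_left_injective [c]) heq
      exact this
    exact this ▸ h₁

theorem lcss_append_last_occurrence {α : Type*} [DecidableEq α]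
    (U V T : List α) (c : α) (hc : c ∉ V) :
    lcss (U ++ [c] ++ V) (T ++ [c]) =
      max (lcss (U ++ [c] ++ V) T) (1 + lcss U T) := by
  apply le_antisymm
  · obtain ⟨L, hS, hT, hlen⟩ := lcss_exists (U ++ [c] ++ V) (T ++ [c])
    rw [← hlen]
    rcases List.sublist_append_iff.mp hT with ⟨l₁, l₂, heq, h₁, h₂⟩
    rcases List.sublist_singleton.mp h₂ with rfl | rfl
    · rw [List.append_nil] at heq; subst heq
      exact le_max_of_le_left (le_lcss hS h₁)
    · subst heq
      -- split hS over (U ++ [c]) ++ V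
      rcases List.sublist_append_iff.mp hS with ⟨m₁, m₂, heq2, g₁, g₂⟩
      rcases List.eq_nil_or_concat m₂ with rfl | ⟨B, b, rfl⟩
      · rw [List.append_nil] at heq2
        have hU : l₁.Sublist U := concat_sublist_concat (heq2 ▸ g₁)
        refine le_max_of_le_right ?_
        simp only [List.length_append, List.length_singleton]
        rw [add_comm]
        exact add_le_add_right (le_lcss hU h₁) 1
      · have hb : b = c := by
          have : (l₁ ++ [c]) = (m₁ ++ B) ++ [b] := by
            rw [heq2, List.append_assoc, List.concat_eq_append]
          have := (List.append_inj' this rfl).2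
          simpa using this.symm
        exact absurd (g₂.subset (by simp [hb])) hc
  · refine max_le ?_ ?_
    · obtain ⟨L, hS, hT, hlen⟩ := lcss_exists (U ++ [c] ++ V) T
      rw [← hlen]
      exact le_lcss hS (hT.trans (List.sublist_append_left T [c]))
    · obtain ⟨L, hU, hT, hlen⟩ := lcss_exists U T
      have h1 : (L ++ [c]).Sublist (U ++ [c] ++ V) :=
        (hU.append (List.Sublist.refl [c])).trans (List.sublist_append_left _ V)
      have h2 : (L ++ [c]).Sublist (T ++ [c]) := hT.append (List.Sublist.refl [c])
      have := le_lcss h1 h2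
      simpa [hlen, add_comm] using this
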